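/- Let T, X ∈ ℚ[[t]] with T = 1 + tT^3 (constant term 1) and X = tT^2(1+X+X^2) (constant term 0), and define for j ≥ 0 the series T_j = T·(1 - X^{j+5})(1 - X^{j+2}) / ((1 - X^{j+4})(1 - X^{j+3})). Then with the convention T_{-1} = 1 and T_{-2} = 0, the family satisfies T_j = 1 + t·T_{j+1}·T_j·T_{j-1} for all j ≥ -1. -/

import Mathlib

/-- Kuba's formula: with `T = 1 + tT^3` and `X = tT^2(1+X+X^2)` in `ℚ[[t]]`, the family
`T_j = T(1-X^{j+5})(1-X^{j+2})/((1-X^{j+4})(1-X^{j+3}))` for `j ≥ 0`, with conventions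
`T_{-1} = 1` and `T_{-2} = 0`, satisfies `T_j = 1 + t·T_{j+1}·T_j·T_{j-1}` for all `j ≥ -1`.
Here `TT k` denotes `T_{k-2}` (so indices are naturals), and the defining formula for
`T_j`, `j ≥ 0`, is stated multiplicatively (the denominators are invertible since `X` has
zero constant term). -/
theorem kuba_recurrence (T Xs : PowerSeries ℚ)
    (hT0 : PowerSeries.constantCoeff T = 1)
    (hT : T = 1 + PowerSeries.X * T ^ 3)
    (hXs0 : PowerSeries.constantCoeff Xs = 0)
    (hXs : Xs = PowerSeries.X * T ^ 2 * (1 + Xs + Xs ^ 2))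
    (TT : ℕ → PowerSeries ℚ)
    (hTTm2 : TT 0 = 0)
    (hTTm1 : TT 1 = 1)
    (hTT : ∀ j : ℕ, TT (j + 2) * ((1 - Xs ^ (j + 4)) * (1 - Xs ^ (j + 3)))
        = T * (1 - Xs ^ (j + 5)) * (1 - Xs ^ (j + 2))) :
    ∀ j : ℕ, TT (j + 1) = 1 + PowerSeries.X * TT (j + 2) * TT (j + 1) * TT j := by
  have hne : ∀ k : ℕ, (1 : PowerSeries ℚ) - Xs ^ (k + 1) ≠ 0 := fun k h => by
    have := congrArg PowerSeries.constantCoeff h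
    simp [hXs0] at this
  have hne2 : (1 : PowerSeries ℚ) + Xs ^ 2 ≠ 0 := fun h => by
    have := congrArg PowerSeries.constantCoeff h
    simp [hXs0] at this
  have hne3 : (1 : PowerSeries ℚ) + Xs + Xs ^ 2 ≠ 0 := fun h => by
    have := congrArg PowerSeries.constantCoeff h
    simp [hXs0] at this
  have key1 : T * (1 + Xs ^ 2) = 1 + Xs + Xs ^ 2 := by
    linear_combination (1 + Xs + Xs ^ 2) * hT - T * hXs
  have key2 : PowerSeries.X * (1 + Xs + Xs ^ 2) ^ 3 = Xs * (1 + Xs ^ 2) ^ 2 := by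
    linear_combination ((1 + Xs ^ 2) ^ 2 - PowerSeries.X * (T ^ 2 * (1 + Xs ^ 2) ^ 2
      + T * (1 + Xs ^ 2) * (1 + Xs + Xs ^ 2) + (1 + Xs + Xs ^ 2) ^ 2)) * key1
      - (1 + Xs ^ 2) ^ 3 * hT
  intro j
  match j with
  | 0 =>
    rw [hTTm1, hTTm2]
    ring
  | 1 =>
    -- target: TT 2 = 1 + X * TT 3 * TT 2 * TT 1
    rw [hTTm1]
    have H1 := hTT 0
    have H2 := hTT 1
    norm_num at H1 H2
    set t := PowerSeries.X (R := ℚ) with ht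
    have hM : ((1 - Xs ^ 5) * (1 - Xs ^ 4) ^ 2 * (1 - Xs ^ 3) * (1 + Xs ^ 2) ^ 2
        * (1 + Xs + Xs ^ 2)) ≠ 0 := by
      refine mul_ne_zero (mul_ne_zero (mul_ne_zero (mul_ne_zero ?_ ?_) ?_) ?_) hne3
      · exact hne 4
      · exact pow_ne_zero _ (hne 3)
      · exact hne 2
      · exact pow_ne_zero _ hne2
    refine mul_right_cancel₀ hM ?_
    linear_combination
      ((1 - Xs ^ 5) * (1 - Xs ^ 4) * (1 + Xs ^ 2) ^ 2 * (1 + Xs + Xs ^ 2)) * H1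
      - (t * (1 + Xs ^ 2) ^ 2 * (1 + Xs + Xs ^ 2) * (TT 2 * ((1 - Xs ^ 4) * (1 - Xs ^ 3)))) * H2
      - (t * (1 + Xs ^ 2) ^ 2 * (1 + Xs + Xs ^ 2) * (T * (1 - Xs ^ 6) * (1 - Xs ^ 3))) * H1
      + ((1 - Xs ^ 5) ^ 2 * (1 - Xs ^ 4) * (1 - Xs ^ 2) * (1 + Xs ^ 2) * (1 + Xs + Xs ^ 2)
         - t * (T * (1 + Xs ^ 2) + (1 + Xs + Xs ^ 2)) * (1 + Xs + Xs ^ 2)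
           * ((1 - Xs ^ 6) * (1 - Xs ^ 5) * (1 - Xs ^ 3) * (1 - Xs ^ 2))) * key1
      - ((1 - Xs ^ 6) * (1 - Xs ^ 5) * (1 - Xs ^ 3) * (1 - Xs ^ 2)) * key2
  | (n + 2) =>
    -- target: TT (n+3) = 1 + X * TT (n+4) * TT (n+3) * TT (n+2)
    have H0 := hTT n
    have H1 := hTT (n + 1)
    have H2 := hTT (n + 2)
    set t := PowerSeries.X (R := ℚ) with ht
    set y := Xs ^ (n + 2) with hy
    have e3 : Xs ^ (n + 3) = Xs * y := by rw [hy, ← pow_succ']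
    have e4 : Xs ^ (n + 4) = Xs ^ 2 * y := by rw [hy, ← pow_add]; ring_nf
    have e5 : Xs ^ (n + 5) = Xs ^ 3 * y := by rw [hy, ← pow_add]; ring_nf
    have e6 : Xs ^ (n + 6) = Xs ^ 4 * y := by rw [hy, ← pow_add]; ring_nf
    have e7 : Xs ^ (n + 7) = Xs ^ 5 * y := by rw [hy, ← pow_add]; ring_nf
    rw [show n + 1 + 4 = n + 5 from rfl, show n + 1 + 3 = n + 4 from rfl,
        show n + 1 + 5 = n + 6 from rfl, show n + 1 + 2 = n + 3 from rfl] at H1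
    rw [show n + 2 + 4 = n + 6 from rfl, show n + 2 + 3 = n + 5 from rfl,
        show n + 2 + 5 = n + 7 from rfl, show n + 2 + 2 = n + 4 from rfl] at H2
    simp only [e3, e4, e5, e6, e7] at H0 H1 H2
    have hyne : ∀ k : ℕ, (1 : PowerSeries ℚ) - Xs ^ (k + 1) * y ≠ 0 := fun k h => by
      have := congrArg PowerSeries.constantCoeff h
      simp [hXs0, hy] at this
    have hM : ((1 - Xs ^ 4 * y) * (1 - Xs ^ 3 * y) ^ 2 * (1 - Xs ^ 2 * y) ^ 2
        * (1 - Xs * y) * (1 + Xs ^ 2)) ≠ 0 := by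
      refine mul_ne_zero (mul_ne_zero (mul_ne_zero (mul_ne_zero ?_ ?_) ?_) ?_) hne2
      · exact hyne 3
      · exact pow_ne_zero _ (hyne 2)
      · exact pow_ne_zero _ (hyne 1)
      · simpa using hyne 0
    refine mul_right_cancel₀ hM ?_
    have E : T * ((1 - Xs ^ 4 * y) ^ 2 * (1 - Xs ^ 3 * y) * (1 - Xs ^ 2 * y)
          * (1 - Xs * y) ^ 2) * (1 + Xs ^ 2)
        = ((1 - Xs ^ 4 * y) * (1 - Xs ^ 3 * y) ^ 2 * (1 - Xs ^ 2 * y) ^ 2 * (1 - Xs * y))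
            * (1 + Xs ^ 2)
          + t * T ^ 3 * ((1 - Xs ^ 5 * y) * (1 - Xs ^ 4 * y) * (1 - Xs ^ 3 * y)
            * (1 - Xs ^ 2 * y) * (1 - Xs * y) * (1 - y)) * (1 + Xs ^ 2) := by
      linear_combination
        ((1 + Xs ^ 2) * ((1 - Xs ^ 5 * y) * (1 - Xs ^ 4 * y) * (1 - Xs ^ 3 * y)
          * (1 - Xs ^ 2 * y) * (1 - Xs * y) * (1 - y))) * hT
        + ((1 - Xs ^ 4 * y) ^ 2 * (1 - Xs ^ 3 * y) * (1 - Xs ^ 2 * y) * (1 - Xs * y) ^ 2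
          - (1 - Xs ^ 5 * y) * (1 - Xs ^ 4 * y) * (1 - Xs ^ 3 * y)
            * (1 - Xs ^ 2 * y) * (1 - Xs * y) * (1 - y)) * key1
    linear_combination
      ((1 + Xs ^ 2) * (1 - Xs ^ 4 * y) * (1 - Xs ^ 3 * y) * (1 - Xs ^ 2 * y) * (1 - Xs * y)) * H1
      - (t * (1 + Xs ^ 2) * (TT (n + 3) * ((1 - Xs ^ 3 * y) * (1 - Xs ^ 2 * y)))
         * (TT (n + 2) * ((1 - Xs ^ 2 * y) * (1 - Xs * y)))) * H2
      - (t * (1 + Xs ^ 2) * (T * (1 - Xs ^ 5 * y) * (1 - Xs ^ 2 * y))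
         * (TT (n + 2) * ((1 - Xs ^ 2 * y) * (1 - Xs * y)))) * H1
      - (t * (1 + Xs ^ 2) * (T * (1 - Xs ^ 5 * y) * (1 - Xs ^ 2 * y))
         * (T * (1 - Xs ^ 4 * y) * (1 - Xs * y))) * H0
      + E
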